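/- arXiv:1601.02719 — 2 statements merged into one kernel-verified Lean document; each statement's English description precedes it below -/
import Mathlib

section
/- Let f : ℝ → ℝ be differentiable on [a,b] with a < b, and suppose y lies strictly between f'(a) and the difference quotient (f(b) - f(a))/(b - a). Then there exists x ∈ (a,b) with f'(x) = y. -/
theorem olsen_case1 (f f' : ℝ → ℝ) (a b y : ℝ) (hab : a < b)
    (hd : ∀ x ∈ Set.Icc a b, HasDerivAt f (f' x) x)
    (h1 : min (f' a) ((f b - f a) / (b - a)) < y)
    (h2 : y < max (f' a) ((f b - f a) / (b - a))) :
    ∃ x ∈ Set.Ioo a b, f' x = y := by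
  have hfc : ContinuousOn f (Set.Icc a b) := fun x hx => (hd x hx).continuousAt.continuousWithinAt
  obtain ⟨c, hc, hc'⟩ := exists_hasDerivAt_eq_slope f f' hab hfc
    (fun x hx => hd x (Set.mem_Icc.2 ⟨hx.1.le, hx.2.le⟩))
  have hsub : Set.Icc a c ⊆ Set.Icc a b := Set.Icc_subset_Icc le_rfl hc.2.le
  have hdw : ∀ x ∈ Set.Icc a c, HasDerivWithinAt f (f' x) (Set.Icc a c) x :=
    fun x hx => (hd x (hsub hx)).hasDerivWithinAt
  rcases le_total (f' a) ((f b - f a) / (b - a)) with h | h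
  · rw [min_eq_left h] at h1; rw [max_eq_right h] at h2
    obtain ⟨x, hx, hx'⟩ := exists_hasDerivWithinAt_eq_of_gt_of_lt hc.1.le hdw h1
      (by rw [hc']; exact h2)
    exact ⟨x, ⟨hx.1, hx.2.trans hc.2⟩, hx'⟩
  · rw [min_eq_right h] at h1; rw [max_eq_left h] at h2
    obtain ⟨x, hx, hx'⟩ := exists_hasDerivWithinAt_eq_of_lt_of_gt hc.1.le hdw
      h2 (by rw [hc']; exact h1)
    exact ⟨x, ⟨hx.1, hx.2.trans hc.2⟩, hx'⟩
end

section
/- Let f : ℝ → ℝ be differentiable on [a,b] with a < b, and suppose y lies strictly between the difference quotient (f(b) - f(a))/(b - a) and f'(b). Then there exists x ∈ (a,b) with f'(x) = y. -/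
theorem olsen_case2 (f f' : ℝ → ℝ) (a b y : ℝ) (hab : a < b)
    (hd : ∀ x ∈ Set.Icc a b, HasDerivAt f (f' x) x)
    (h1 : min ((f b - f a) / (b - a)) (f' b) < y)
    (h2 : y < max ((f b - f a) / (b - a)) (f' b)) :
    ∃ x ∈ Set.Ioo a b, f' x = y := by
  -- MVT gives c ∈ (a,b) with f' c = slope
  obtain ⟨c, hc, hfc⟩ := exists_hasDerivAt_eq_slope f f' hab
    (fun x hx => (hd x hx).continuousAt.continuousWithinAt)
    (fun x hx => hd x (Set.Ioo_subset_Icc_self hx))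
  have hcb : c ≤ b := hc.2.le
  have hsub : Set.Icc c b ⊆ Set.Icc a b := Set.Icc_subset_Icc hc.1.le le_rfl
  have hder : ∀ x ∈ Set.Icc c b, HasDerivWithinAt f (f' x) (Set.Icc c b) x :=
    fun x hx => ((hd x (hsub hx)).hasDerivWithinAt)
  have key : y ∈ f' '' Set.Ioo c b := by
    rcases lt_or_ge (f' c) (f' b) with h | h
    · apply exists_hasDerivWithinAt_eq_of_gt_of_lt hcb hder
      · rw [hfc]; exact lt_of_eq_of_lt (min_eq_left (by rw [← hfc]; exact h.le)).symm h1
      · exact lt_of_lt_of_eq h2 (max_eq_right (by rw [← hfc]; exact h.le))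
    · apply exists_hasDerivWithinAt_eq_of_lt_of_gt hcb hder
      · rw [hfc]; exact lt_of_lt_of_eq h2 (max_eq_left (by rw [← hfc]; exact h))
      · exact lt_of_eq_of_lt (min_eq_right (by rw [← hfc]; exact h)).symm h1
  obtain ⟨x, hx, hfx⟩ := key
  exact ⟨x, ⟨lt_of_le_of_lt hc.1.le hx.1, hx.2⟩, hfx⟩
end
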